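/- For m ≠ n in {1,2,3} and α, β ∈ [0,1], let P(m,n,α,β) denote the 3×3 real matrix that equals the identity except on rows and columns m, n, where it is given by the 2×2 block [[1−α, β],[α, 1−β]]. Let T be the 3×3 matrix with T_ii = 0 and T_ij = 1/2 for i ≠ j. Then T cannot be written as a finite product of matrices of the form P(m,n,α,β): for every finite list L of such primitive matrices, the product of L is not equal to T. -/

import Mathlib

open Matrix

/-- The primitive (two-state) stochastic operation acting nontrivially only on
states `m` and `n`, given by the 2×2 block `[[1−α, β],[α, 1−β]]` there and the
identity elsewhere. -/
noncomputable def primitiveOp (m n : Fin 3) (α β : ℝ) : Matrix (Fin 3) (Fin 3) ℝ :=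
  fun i j =>
    if i = m ∧ j = m then 1 - α
    else if i = n ∧ j = m then α
    else if i = m ∧ j = n then β
    else if i = n ∧ j = n then 1 - β
    else if i = j then 1 else 0

/-- The 3×3 stochastic matrix with `0` on the diagonal and `1/2` off the diagonal. -/
noncomputable def offDiagHalf : Matrix (Fin 3) (Fin 3) ℝ :=
  fun i j => if i = j then 0 else 1 / 2

lemma third : ∀ m n : Fin 3, m ≠ n → ∃ k, k ≠ m ∧ k ≠ n ∧ ∀ i : Fin 3, i = m ∨ i = n ∨ i = k := by
  decide

lemma univ3 : ∀ m n k : Fin 3, m ≠ n → k ≠ m → k ≠ n →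
    (Finset.univ : Finset (Fin 3)) = {m, n, k} := by decide

lemma sum3 (m n k : Fin 3) (hmn : m ≠ n) (hkm : k ≠ m) (hkn : k ≠ n) (g : Fin 3 → ℝ) :
    ∑ l, g l = g m + g n + g k := by
  rw [univ3 m n k hmn hkm hkn]
  rw [Finset.sum_insert (by simp [hmn, hkm.symm]), Finset.sum_insert (by simp [hkn.symm]),
    Finset.sum_singleton, add_assoc]

section entries
variable {m n k : Fin 3} {α β : ℝ}

lemma Pmm : primitiveOp m n α β m m = 1 - α := by simp [primitiveOp]
lemma Pmn (hmn : m ≠ n) : primitiveOp m n α β m n = β := by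
  simp [primitiveOp, hmn, hmn.symm]
lemma Pmk (hmn : m ≠ n) (hkm : k ≠ m) (hkn : k ≠ n) : primitiveOp m n α β m k = 0 := by
  simp [primitiveOp, hmn, hkm, hkn, hkm.symm, hkn.symm]
lemma Pnm (hmn : m ≠ n) : primitiveOp m n α β n m = α := by
  simp [primitiveOp, hmn, hmn.symm]
lemma Pnn (hmn : m ≠ n) : primitiveOp m n α β n n = 1 - β := by
  simp [primitiveOp, hmn, hmn.symm]
lemma Pnk (hmn : m ≠ n) (hkm : k ≠ m) (hkn : k ≠ n) : primitiveOp m n α β n k = 0 := by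
  simp [primitiveOp, hmn, hmn.symm, hkm, hkn, hkm.symm, hkn.symm]
lemma Pkm (hkm : k ≠ m) (hkn : k ≠ n) : primitiveOp m n α β k m = 0 := by
  simp [primitiveOp, hkm, hkn]
lemma Pkn (hkm : k ≠ m) (hkn : k ≠ n) : primitiveOp m n α β k n = 0 := by
  simp [primitiveOp, hkm, hkn]
lemma Pkk (hkm : k ≠ m) (hkn : k ≠ n) : primitiveOp m n α β k k = 1 := by
  simp [primitiveOp, hkm, hkn]

lemma prim_nonneg (hα : α ∈ Set.Icc (0:ℝ) 1) (hβ : β ∈ Set.Icc (0:ℝ) 1) (i j : Fin 3) :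
    0 ≤ primitiveOp m n α β i j := by
  obtain ⟨ha0, ha1⟩ := hα; obtain ⟨hb0, hb1⟩ := hβ
  unfold primitiveOp
  split_ifs <;> linarith

end entries

lemma prod_nonneg_list : ∀ (L : List (Matrix (Fin 3) (Fin 3) ℝ)),
    (∀ P ∈ L, ∃ m n : Fin 3, ∃ α β : ℝ, m ≠ n ∧
        α ∈ Set.Icc (0:ℝ) 1 ∧ β ∈ Set.Icc (0:ℝ) 1 ∧ P = primitiveOp m n α β) →
    ∀ i j, 0 ≤ L.prod i j := by
  intro L
  induction L with
  | nil =>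
    intro _ i j
    simp only [List.prod_nil, Matrix.one_apply]
    split_ifs <;> norm_num
  | cons P L ih =>
    intro hL i j
    rw [List.prod_cons, Matrix.mul_apply]
    apply Finset.sum_nonneg
    intro l _
    obtain ⟨m, n, α, β, hmn, hα, hβ, hPe⟩ := hL P List.mem_cons_self
    exact mul_nonneg (hPe ▸ prim_nonneg hα hβ _ _)
      (ih (fun Q hQ => hL Q (List.mem_cons_of_mem _ hQ)) _ _)

lemma key : ∀ (L : List (Matrix (Fin 3) (Fin 3) ℝ)),
    (∀ P ∈ L, ∃ m n : Fin 3, ∃ α β : ℝ, m ≠ n ∧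
        α ∈ Set.Icc (0:ℝ) 1 ∧ β ∈ Set.Icc (0:ℝ) 1 ∧ P = primitiveOp m n α β) →
    ∀ f : Fin 3 → Fin 3, Function.Surjective f →
    (∀ j, L.prod (f j) j = 0) → (∀ i j, i ≠ f j → 0 < L.prod i j) → False := by
  intro L
  induction L with
  | nil =>
    intro _ f _ h0 hpos
    have h3 : ∀ x : Fin 3, x = 0 ∨ x = 1 ∨ x = 2 := by decide
    have hone : ∀ i j : Fin 3, i ≠ j → (List.prod ([] : List (Matrix (Fin 3) (Fin 3) ℝ))) i j = 0 := by
      intro i j hij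
      simp [Matrix.one_apply, hij]
    rcases h3 (f 0) with h | h | h
    · have := hpos 1 0 (by rw [h]; decide)
      rw [hone 1 0 (by decide)] at this; exact lt_irrefl _ this
    · have := hpos 2 0 (by rw [h]; decide)
      rw [hone 2 0 (by decide)] at this; exact lt_irrefl _ this
    · have := hpos 1 0 (by rw [h]; decide)
      rw [hone 1 0 (by decide)] at this; exact lt_irrefl _ this
  | cons P L ih =>
    intro hL f hf h0 hpos
    obtain ⟨m, n, α, β, hmn, hα, hβ, hPe⟩ := hL P List.mem_cons_self
    have hL' := fun Q hQ => hL Q (List.mem_cons_of_mem P hQ)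
    set N := L.prod with hN
    have hNpos : ∀ i j, 0 ≤ N i j := prod_nonneg_list L hL'
    obtain ⟨k, hkm, hkn, hcov⟩ := third m n hmn
    -- entry formulas for M = (P :: L).prod
    have hMm : ∀ j, (P :: L).prod m j = (1-α) * N m j + β * N n j := by
      intro j
      rw [List.prod_cons, Matrix.mul_apply, sum3 m n k hmn hkm hkn, hPe,
        Pmm, Pmn hmn, Pmk hmn hkm hkn, zero_mul, add_zero]
    have hMn : ∀ j, (P :: L).prod n j = α * N m j + (1-β) * N n j := by
      intro j
      rw [List.prod_cons, Matrix.mul_apply, sum3 m n k hmn hkm hkn, hPe,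
        Pnm hmn, Pnn hmn, Pnk hmn hkm hkn, zero_mul, add_zero]
    have hMk : ∀ j, (P :: L).prod k j = N k j := by
      intro j
      rw [List.prod_cons, Matrix.mul_apply, sum3 m n k hmn hkm hkn, hPe,
        Pkm hkm hkn, Pkn hkm hkn, Pkk hkm hkn, zero_mul, zero_mul, one_mul, zero_add, zero_add]
    obtain ⟨jm, hjm⟩ := hf m
    obtain ⟨jn, hjn⟩ := hf n
    -- zero/positivity facts
    have hzm : (1-α) * N m jm + β * N n jm = 0 := by rw [← hMm]; rw [← hjm] at *; exact h0 jm
    have hzn : α * N m jn + (1-β) * N n jn = 0 := by rw [← hMn]; rw [← hjn] at *; exact h0 jn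
    have h1 : (1-α) * N m jm = 0 := by
      have t1 : 0 ≤ (1-α) * N m jm := mul_nonneg (by linarith [hα.2]) (hNpos _ _)
      have t2 : 0 ≤ β * N n jm := mul_nonneg hβ.1 (hNpos _ _)
      linarith
    have h2 : β * N n jm = 0 := by
      have t1 : 0 ≤ (1-α) * N m jm := mul_nonneg (by linarith [hα.2]) (hNpos _ _)
      linarith [mul_nonneg hβ.1 (hNpos n jm)]
    have h3 : α * N m jn = 0 := by
      have t2 : 0 ≤ (1-β) * N n jn := mul_nonneg (by linarith [hβ.2]) (hNpos _ _)
      linarith [mul_nonneg hα.1 (hNpos m jn)]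
    have h4 : (1-β) * N n jn = 0 := by
      have t1 : 0 ≤ α * N m jn := mul_nonneg hα.1 (hNpos _ _)
      linarith [mul_nonneg (show (0:ℝ) ≤ 1-β by linarith [hβ.2]) (hNpos n jn)]
    have hp1 : 0 < α * N m jm + (1-β) * N n jm := by
      rw [← hMn jm]; exact hpos n jm (by rw [hjm]; exact hmn.symm)
    have hp2 : 0 < (1-α) * N m jn + β * N n jn := by
      rw [← hMm jn]; exact hpos m jn (by rw [hjn]; exact hmn)
    -- dichotomy
    have hcases : (α = 0 ∧ β = 0) ∨ (α = 1 ∧ β = 1) := by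
      rcases lt_or_eq_of_le hα.2 with hα1 | hα1
      · left
        have hNm : N m jm = 0 := by
          rcases mul_eq_zero.mp h1 with h | h
          · exfalso; linarith
          · exact h
        have hNn : 0 < (1-β) * N n jm := by
          rw [hNm, mul_zero, zero_add] at hp1; exact hp1
        have hNnjm : 0 < N n jm := by
          by_contra hc
          have : N n jm = 0 := le_antisymm (not_lt.mp hc) (hNpos _ _)
          rw [this, mul_zero] at hNn; exact lt_irrefl _ hNn
        have hb0 : β = 0 := by
          rcases mul_eq_zero.mp h2 with h | h
          · exact h
          · exfalso; rw [h] at hNnjm; exact lt_irrefl _ hNnjm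
        refine ⟨?_, hb0⟩
        have hNmjn : 0 < N m jn := by
          rw [hb0, zero_mul, add_zero] at hp2
          by_contra hc
          have : N m jn = 0 := le_antisymm (not_lt.mp hc) (hNpos _ _)
          rw [this, mul_zero] at hp2; exact lt_irrefl _ hp2
        rcases mul_eq_zero.mp h3 with h | h
        · exact h
        · exfalso; rw [h] at hNmjn; exact lt_irrefl _ hNmjn
      · right
        refine ⟨hα1, ?_⟩
        have hNmjn : N m jn = 0 := by
          rcases mul_eq_zero.mp h3 with h | h
          · exfalso; linarith
          · exact h
        have hbpos : 0 < β * N n jn := by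
          rw [hNmjn, mul_zero, zero_add] at hp2; exact hp2
        have hNnjn : 0 < N n jn := by
          by_contra hc
          have : N n jn = 0 := le_antisymm (not_lt.mp hc) (hNpos _ _)
          rw [this, mul_zero] at hbpos; exact lt_irrefl _ hbpos
        rcases mul_eq_zero.mp h4 with h | h
        · linarith
        · exfalso; rw [h] at hNnjn; exact lt_irrefl _ hNnjn
    rcases hcases with ⟨ha, hb⟩ | ⟨ha, hb⟩
    ·
      subst ha; subst hb
      apply ih hL' f hf
      · intro j
        have hz := h0 j
        rcases hcov (f j) with h | h | h <;> rw [h] at hz ⊢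
        · rw [hMm j] at hz; linarith
        · rw [hMn j] at hz; linarith
        · rw [hMk j] at hz; linarith
      · intro i j hij
        have := hpos i j hij
        rcases hcov i with h | h | h <;> rw [h] at this ⊢
        · rw [hMm j] at this; linarith
        · rw [hMn j] at this; linarith
        · rw [hMk j] at this; linarith
    · -- P is the swap of m and n
      subst ha; subst hb
      have hswap : ∀ i j, N i j = (P :: L).prod (Equiv.swap m n i) j := by
        intro i j
        rcases hcov i with h | h | h <;> subst h
        · rw [Equiv.swap_apply_left, hMn j]; ring
        · rw [Equiv.swap_apply_right, hMm j]; ring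
        · rw [Equiv.swap_apply_of_ne_of_ne hkm hkn, hMk j]
      apply ih hL' (fun j => Equiv.swap m n (f j))
        ((Equiv.swap m n).surjective.comp hf)
      · intro j
        rw [hswap, Equiv.swap_apply_self]
        exact h0 j
      · intro i j hij
        rw [hswap]
        apply hpos
        intro hc
        apply hij
        rw [← hc, Equiv.swap_apply_self]


/-- **No-go for gate-type decompositions of stochastic maps.**
The matrix `offDiagHalf` cannot be written as a finite product of primitive
operations `primitiveOp m n α β` with `m ≠ n` and `α, β ∈ [0,1]`. -/
theorem no_primitive_decomposition
    (L : List (Matrix (Fin 3) (Fin 3) ℝ))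
    (hL : ∀ P ∈ L, ∃ m n : Fin 3, ∃ α β : ℝ, m ≠ n ∧
        α ∈ Set.Icc (0:ℝ) 1 ∧ β ∈ Set.Icc (0:ℝ) 1 ∧ P = primitiveOp m n α β) :
    L.prod ≠ offDiagHalf := by
  intro heq
  apply key L hL id Function.surjective_id
  · intro j
    rw [heq]
    simp [offDiagHalf]
  · intro i j hij
    rw [heq]
    simp only [offDiagHalf, id] at hij ⊢
    rw [if_neg hij]
    norm_num
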